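/- For k, i, j ∈ ℕ = {1, 2, 3, …}, set α^{(k)}_{ij} = j^k if i < k and α^{(k)}_{ij} = i^k if i ≥ k. Fix a bijection φ : ℕ × ℕ → ℕ such that φ(i, j) < φ(i, j+1) for all i, j, and define p^{(k)}_n = α^{(k)}_{φ^{-1}(n)}. Let A(P) = { a : ℕ → ℂ : ‖a‖_k := Σ_n |a_n|·p^{(k)}_n < ∞ for every k ∈ ℕ }, endowed with the locally convex topology generated by the norms ‖·‖_k (k ∈ ℕ) and with the product (a*b)_n = a_n·b_n + a_n·(Σ_{m>n} b_m) + b_n·(Σ_{m>n} a_m). Then A(P) is a commutative topological algebra which has a locally bounded approximate identity but does not have a bounded approximate identity. -/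

import Mathlib

open Filter Topology

/-- The Köthe–Grothendieck matrix: `α^{(k)}_{ij} = j^k` if `i < k`, and `i^k` if `i ≥ k`
(indices in `ℕ+ = {1, 2, 3, …}`). -/
noncomputable def kgMatrix (k i j : ℕ+) : ℝ :=
  if i < k then ((j : ℕ) : ℝ) ^ (k : ℕ) else ((i : ℕ) : ℝ) ^ (k : ℕ)

/-- The weights `p^{(k)}_n = α^{(k)}_{φ⁻¹(n)}`. -/
noncomputable def kgWeight (φ : ℕ+ × ℕ+ ≃ ℕ+) (k n : ℕ+) : ℝ :=
  kgMatrix k (φ.symm n).1 (φ.symm n).2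

/-- Membership in the Köthe space `A(P)`. -/
def memKG (φ : ℕ+ × ℕ+ ≃ ℕ+) (a : ℕ+ → ℂ) : Prop :=
  ∀ k : ℕ+, Summable fun n => ‖a n‖ * kgWeight φ k n

/-- The norm `‖a‖_k = Σ_n |a_n| p^{(k)}_n` on `A(P)`. -/
noncomputable def kgNorm (φ : ℕ+ × ℕ+ ≃ ℕ+) (k : ℕ+) (a : ℕ+ → ℂ) : ℝ :=
  ∑' n, ‖a n‖ * kgWeight φ k n

/-- The sum of the tail `Σ_{j > k} a j`. -/
noncomputable def tailSum (a : ℕ+ → ℂ) (k : ℕ+) : ℂ :=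
  ∑' j : ℕ+, if k < j then a j else 0

/-- The product `(a*b)_n = a_n b_n + a_n (Σ_{m>n} b_m) + b_n (Σ_{m>n} a_m)`,
the unique continuous bilinear extension of `e_i * e_j = e_{min i j}`. -/
noncomputable def kmul (a b : ℕ+ → ℂ) : ℕ+ → ℂ :=
  fun n => a n * b n + a n * tailSum b n + b n * tailSum a n

namespace KGaux

/-! ### Basic weight facts -/

lemma one_le_weight (φ : ℕ+ × ℕ+ ≃ ℕ+) (k n : ℕ+) : 1 ≤ kgWeight φ k n := by
  unfold kgWeight kgMatrix
  split <;> exact one_le_pow₀ (by exact_mod_cast PNat.one_le _)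

lemma weight_nonneg (φ : ℕ+ × ℕ+ ≃ ℕ+) (k n : ℕ+) : 0 ≤ kgWeight φ k n :=
  zero_le_one.trans (one_le_weight φ k n)

/-! ### ite-tsum helpers (real valued, nonneg) -/

variable {ι : Type*}

lemma ite_nonneg {P : ι → Prop} [DecidablePred P] {f : ι → ℝ} (h0 : ∀ n, 0 ≤ f n) (n : ι) :
    0 ≤ if P n then f n else 0 := by split <;> simp [h0 n]

lemma ite_le_self {P : ι → Prop} [DecidablePred P] {f : ι → ℝ} (h0 : ∀ n, 0 ≤ f n) (n : ι) :
    (if P n then f n else 0) ≤ f n := by split <;> simp [h0 n]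

lemma summable_ite {P : ι → Prop} [DecidablePred P] {f : ι → ℝ} (h0 : ∀ n, 0 ≤ f n)
    (hf : Summable f) : Summable fun n => if P n then f n else 0 :=
  Summable.of_nonneg_of_le (ite_nonneg h0) (ite_le_self h0) hf

lemma tsum_ite_nonneg {P : ι → Prop} [DecidablePred P] {f : ι → ℝ} (h0 : ∀ n, 0 ≤ f n) :
    0 ≤ ∑' n, if P n then f n else 0 := tsum_nonneg (ite_nonneg h0)

lemma tsum_ite_le {P : ι → Prop} [DecidablePred P] {f : ι → ℝ} (h0 : ∀ n, 0 ≤ f n)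
    (hf : Summable f) : (∑' n, if P n then f n else 0) ≤ ∑' n, f n :=
  Summable.tsum_le_tsum (ite_le_self h0) (summable_ite h0 hf) hf

lemma tsum_ite_mono {P Q : ι → Prop} [DecidablePred P] [DecidablePred Q]
    (hPQ : ∀ n, P n → Q n) {f : ι → ℝ} (h0 : ∀ n, 0 ≤ f n) (hf : Summable f) :
    (∑' n, if P n then f n else 0) ≤ ∑' n, if Q n then f n else 0 := by
  refine Summable.tsum_le_tsum (fun n => ?_) (summable_ite h0 hf) (summable_ite h0 hf)
  by_cases h : P n
  · rw [if_pos h, if_pos (hPQ n h)]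
  · rw [if_neg h]; exact ite_nonneg h0 n

lemma tsum_ite_mono_fn {P : ι → Prop} [DecidablePred P] {f g : ι → ℝ}
    (h0 : ∀ n, 0 ≤ f n) (hfg : ∀ n, f n ≤ g n) (hg : Summable g) :
    (∑' n, if P n then f n else 0) ≤ ∑' n, if P n then g n else 0 := by
  have h0g : ∀ n, 0 ≤ g n := fun n => (h0 n).trans (hfg n)
  have hle : ∀ n, (if P n then f n else 0) ≤ if P n then g n else 0 := fun n => by
    by_cases h : P n
    · rw [if_pos h, if_pos h]; exact hfg n
    · rw [if_neg h, if_neg h]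
  exact Summable.tsum_le_tsum hle
    (Summable.of_nonneg_of_le (ite_nonneg h0) hle (summable_ite h0g hg)) (summable_ite h0g hg)

/-! ### complex ite summability and head/tail split -/

lemma summable_ite_c {f : ℕ+ → ℂ} (hf : Summable f) (P : ℕ+ → Prop) [DecidablePred P] :
    Summable fun n => if P n then f n else 0 := by
  refine (hf.indicator {n | P n}).congr fun n => ?_
  by_cases h : P n <;> simp [Set.indicator_apply, Set.mem_setOf_eq, h]

lemma tsum_ite_ge_split (f : ℕ+ → ℂ) (hf : Summable f) (N : ℕ+) :
    ∑' m, (if N ≤ m then f m else 0) = f N + ∑' m, (if N < m then f m else 0) := by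
  have h1 : Summable fun m => if m = N then f m else 0 := summable_ite_c hf _
  have h2 : Summable fun m => if N < m then f m else 0 := summable_ite_c hf _
  have key : (fun m => if N ≤ m then f m else 0)
      = fun m => (if m = N then f m else 0) + (if N < m then f m else 0) := by
    funext m
    rcases lt_trichotomy m N with h | h | h
    · rw [if_neg (not_le.2 h), if_neg h.ne, if_neg (asymm h), add_zero]
    · subst h; simp
    · rw [if_pos h.le, if_neg h.ne', if_pos h, zero_add]
  rw [key, Summable.tsum_add h1 h2]
  congr 1
  rw [tsum_congr (fun m => ?_), tsum_ite_eq N (fun _ => f N)]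
  by_cases h : m = N <;> simp [h]

lemma tsum_ite_ge_split_r (f : ℕ+ → ℝ) (hf : Summable f) (h0 : ∀ n, 0 ≤ f n) (N : ℕ+) :
    ∑' m, (if N ≤ m then f m else 0) = f N + ∑' m, (if N < m then f m else 0) := by
  have h1 : Summable fun m => if m = N then f m else 0 :=
    summable_ite (P := fun m => m = N) h0 hf
  have h2 : Summable fun m => if N < m then f m else 0 := summable_ite h0 hf
  have key : (fun m => if N ≤ m then f m else 0)
      = fun m => (if m = N then f m else 0) + (if N < m then f m else 0) := by
    funext m
    rcases lt_trichotomy m N with h | h | h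
    · rw [if_neg (not_le.2 h), if_neg h.ne, if_neg (asymm h), add_zero]
    · subst h; simp
    · rw [if_pos h.le, if_neg h.ne', if_pos h, zero_add]
  rw [key, Summable.tsum_add h1 h2]
  congr 1
  rw [tsum_congr (fun m => ?_), tsum_ite_eq N (fun _ => f N)]
  by_cases h : m = N <;> simp [h]

/-! ### tail norm bounds -/

lemma summable_norm_of (φ : ℕ+ × ℕ+ ≃ ℕ+) (k : ℕ+) {a : ℕ+ → ℂ}
    (ha : Summable fun n => ‖a n‖ * kgWeight φ k n) : Summable fun n => ‖a n‖ :=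
  Summable.of_nonneg_of_le (fun n => norm_nonneg _)
    (fun n => le_mul_of_one_le_right (norm_nonneg _) (one_le_weight φ k n)) ha

lemma norm_tailSum_le (φ : ℕ+ × ℕ+ ≃ ℕ+) (k : ℕ+) {a : ℕ+ → ℂ}
    (ha : Summable fun n => ‖a n‖ * kgWeight φ k n) (N : ℕ+) :
    ‖tailSum a N‖ ≤ ∑' m, (if N < m then ‖a m‖ * kgWeight φ k m else 0) := by
  have hna : Summable fun n => ‖a n‖ := summable_norm_of φ k ha
  have hnite : Summable fun m => ‖if N < m then a m else 0‖ := by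
    refine (summable_ite (P := fun m => N < m) (fun n => norm_nonneg (a n)) hna).congr fun m => ?_
    by_cases h : N < m <;> simp [h]
  have h1 : ‖tailSum a N‖ ≤ ∑' m, ‖if N < m then a m else 0‖ := norm_tsum_le_tsum_norm hnite
  refine h1.trans ?_
  have h2 : (∑' m, ‖if N < m then a m else 0‖) = ∑' m, if N < m then ‖a m‖ else 0 :=
    tsum_congr fun m => by by_cases h : N < m <;> simp [h]
  rw [h2]
  exact tsum_ite_mono_fn (fun n => norm_nonneg _)
    (fun n => le_mul_of_one_le_right (norm_nonneg _) (one_le_weight φ k n)) ha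

lemma norm_headTail_le (φ : ℕ+ × ℕ+ ≃ ℕ+) (k : ℕ+) {a : ℕ+ → ℂ}
    (ha : Summable fun n => ‖a n‖ * kgWeight φ k n) (N : ℕ+) :
    ‖a N + tailSum a N‖ ≤ ∑' m, (if N ≤ m then ‖a m‖ * kgWeight φ k m else 0) := by
  rw [tsum_ite_ge_split_r _ ha (fun n => mul_nonneg (norm_nonneg _) (weight_nonneg φ k n)) N]
  exact (norm_add_le _ _).trans (add_le_add
    (le_mul_of_one_le_right (norm_nonneg _) (one_le_weight φ k N)) (norm_tailSum_le φ k ha N))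

/-! ### the key submultiplicativity lemma -/

lemma kmul_key (φ : ℕ+ × ℕ+ ≃ ℕ+) (k : ℕ+) {a b : ℕ+ → ℂ}
    (ha : Summable fun n => ‖a n‖ * kgWeight φ k n)
    (hb : Summable fun n => ‖b n‖ * kgWeight φ k n) :
    Summable (fun n => ‖kmul a b n‖ * kgWeight φ k n) ∧
      ∑' n, ‖kmul a b n‖ * kgWeight φ k n ≤
        (∑' n, ‖a n‖ * kgWeight φ k n) * (∑' n, ‖b n‖ * kgWeight φ k n) := by
  set w : ℕ+ → ℝ := kgWeight φ k with hw
  have hw1 : ∀ n, 1 ≤ w n := one_le_weight φ k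
  have hw0 : ∀ n, 0 ≤ w n := weight_nonneg φ k
  set A : ℕ+ → ℝ := fun n => ‖a n‖ * w n with hAdef
  set B : ℕ+ → ℝ := fun n => ‖b n‖ * w n with hBdef
  have hA0 : ∀ n, 0 ≤ A n := fun n => mul_nonneg (norm_nonneg _) (hw0 n)
  have hB0 : ∀ n, 0 ≤ B n := fun n => mul_nonneg (norm_nonneg _) (hw0 n)
  set SB : ℕ+ → ℝ := fun n => ∑' m, if n ≤ m then B m else 0 with hSBdef
  set TA : ℕ+ → ℝ := fun n => ∑' m, if n < m then A m else 0 with hTAdef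
  have hSB0 : ∀ n, 0 ≤ SB n := fun n => tsum_ite_nonneg hB0
  have hTA0 : ∀ n, 0 ≤ TA n := fun n => tsum_ite_nonneg hA0
  have hSBle : ∀ n, SB n ≤ ∑' m, B m := fun n => tsum_ite_le hB0 hb
  have hTAle : ∀ n, TA n ≤ ∑' m, A m := fun n => tsum_ite_le hA0 ha
  have hpt : ∀ n, ‖kmul a b n‖ * w n ≤ A n * SB n + B n * TA n := by
    intro n
    have h1 : ‖kmul a b n‖ ≤ ‖a n‖ * ‖b n + tailSum b n‖ + ‖b n‖ * ‖tailSum a n‖ := by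
      have he : kmul a b n = a n * (b n + tailSum b n) + b n * tailSum a n := by
        simp only [kmul]; ring
      rw [he]
      exact (norm_add_le _ _).trans (by rw [norm_mul, norm_mul])
    have h2 : ‖b n + tailSum b n‖ ≤ SB n := norm_headTail_le φ k hb n
    have h3 : ‖tailSum a n‖ ≤ TA n := norm_tailSum_le φ k ha n
    calc ‖kmul a b n‖ * w n
        ≤ (‖a n‖ * ‖b n + tailSum b n‖ + ‖b n‖ * ‖tailSum a n‖) * w n :=
          mul_le_mul_of_nonneg_right h1 (hw0 n)
      _ = (‖a n‖ * w n) * ‖b n + tailSum b n‖ + (‖b n‖ * w n) * ‖tailSum a n‖ := by ring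
      _ ≤ A n * SB n + B n * TA n :=
          add_le_add (mul_le_mul_of_nonneg_left h2 (hA0 n))
            (mul_le_mul_of_nonneg_left h3 (hB0 n))
  have hs1 : Summable fun n => A n * SB n :=
    Summable.of_nonneg_of_le (fun n => mul_nonneg (hA0 n) (hSB0 n))
      (fun n => mul_le_mul_of_nonneg_left (hSBle n) (hA0 n)) (ha.mul_right _)
  have hs2 : Summable fun n => B n * TA n :=
    Summable.of_nonneg_of_le (fun n => mul_nonneg (hB0 n) (hTA0 n))
      (fun n => mul_le_mul_of_nonneg_left (hTAle n) (hB0 n)) (hb.mul_right _)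
  have hsum : Summable (fun n => ‖kmul a b n‖ * w n) :=
    Summable.of_nonneg_of_le (fun n => mul_nonneg (norm_nonneg _) (hw0 n)) hpt (hs1.add hs2)
  refine ⟨hsum, ?_⟩
  have step1 : ∑' n, ‖kmul a b n‖ * w n ≤ ∑' n, (A n * SB n + B n * TA n) :=
    Summable.tsum_le_tsum hpt hsum (hs1.add hs2)
  set f : ℕ+ × ℕ+ → ℝ := fun p => A p.1 * B p.2 with hfd
  have hfs : Summable f := ha.mul_of_nonneg hb hA0 hB0
  have hf0 : ∀ p, 0 ≤ f p := fun p => mul_nonneg (hA0 _) (hB0 _)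
  set F1 : ℕ+ × ℕ+ → ℝ := fun p => if p.1 ≤ p.2 then f p else 0 with hF1d
  set F2 : ℕ+ × ℕ+ → ℝ := fun p => if p.2 < p.1 then f p else 0 with hF2d
  have hF1s : Summable F1 :=
    Summable.of_nonneg_of_le (ite_nonneg hf0) (ite_le_self hf0) hfs
  have hF2s : Summable F2 :=
    Summable.of_nonneg_of_le (ite_nonneg hf0) (ite_le_self hf0) hfs
  have e1 : ∑' n, A n * SB n = ∑' p, F1 p := by
    rw [Summable.tsum_prod' hF1s hF1s.prod_factor]
    refine tsum_congr fun n => ?_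
    have : ∀ m : ℕ+, F1 (n, m) = A n * (if n ≤ m then B m else 0) := fun m => by
      simp only [hF1d, hfd, mul_ite, mul_zero]
    rw [tsum_congr this, tsum_mul_left]
  have e2 : ∑' n, B n * TA n = ∑' p, F2 p := by
    have hGs : Summable (fun q : ℕ+ × ℕ+ => F2 (q.2, q.1)) :=
      hF2s.comp_injective Prod.swap_injective
    have h1 : ∑' (n : ℕ+) (m : ℕ+), F2 (m, n) = ∑' q : ℕ+ × ℕ+, F2 (q.2, q.1) :=
      (Summable.tsum_prod' hGs hGs.prod_factor).symm
    have h2 : ∑' q : ℕ+ × ℕ+, F2 (q.2, q.1) = ∑' p, F2 p := (Equiv.prodComm ℕ+ ℕ+).tsum_eq F2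
    rw [← h2, ← h1]
    refine tsum_congr fun n => ?_
    have : ∀ m : ℕ+, F2 (m, n) = B n * (if n < m then A m else 0) := fun m => by
      simp only [hF2d, hfd, Prod.swap, mul_ite, mul_zero]
      by_cases h : n < m <;> simp [h, mul_comm]
    rw [tsum_congr this, tsum_mul_left]
  have hsplit : ∀ p : ℕ+ × ℕ+, F1 p + F2 p = f p := by
    intro p
    rcases le_or_gt p.1 p.2 with h | h
    · simp only [hF1d, hF2d]; rw [if_pos h, if_neg (not_lt.2 h), add_zero]
    · simp only [hF1d, hF2d]; rw [if_neg (not_le.2 h), if_pos h, zero_add]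
  have ftot : ∑' p, f p = (∑' n, A n) * (∑' n, B n) := by
    rw [Summable.tsum_prod' hfs hfs.prod_factor]
    have : ∀ n : ℕ+, (∑' m, f (n, m)) = A n * ∑' m, B m := fun n => by
      simp only [hfd]; exact tsum_mul_left
    rw [tsum_congr this, tsum_mul_right]
  calc ∑' n, ‖kmul a b n‖ * w n ≤ ∑' n, (A n * SB n + B n * TA n) := step1
    _ = ∑' n, A n * SB n + ∑' n, B n * TA n := Summable.tsum_add hs1 hs2
    _ = ∑' p, F1 p + ∑' p, F2 p := by rw [e1, e2]
    _ = ∑' p, f p := by rw [← Summable.tsum_add hF1s hF2s]; exact tsum_congr hsplit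
    _ = (∑' n, A n) * (∑' n, B n) := ftot

/-! ### delta elements -/

noncomputable def delta (N : ℕ+) : ℕ+ → ℂ := fun n => if n = N then 1 else 0

lemma delta_norm_fun (φ : ℕ+ × ℕ+ ≃ ℕ+) (k N : ℕ+) :
    (fun n => ‖delta N n‖ * kgWeight φ k n) = fun n => if n = N then kgWeight φ k N else 0 := by
  funext n; by_cases h : n = N <;> simp [delta, h]

lemma memKG_delta (φ : ℕ+ × ℕ+ ≃ ℕ+) (N : ℕ+) : memKG φ (delta N) := by
  intro k
  rw [delta_norm_fun φ k N]
  exact summable_of_ne_finset_zero (s := {N}) (fun m hm => by simp at hm; simp [hm])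

lemma kgNorm_delta (φ : ℕ+ × ℕ+ ≃ ℕ+) (k N : ℕ+) : kgNorm φ k (delta N) = kgWeight φ k N := by
  rw [kgNorm, delta_norm_fun φ k N]; exact tsum_ite_eq N _

lemma tailSum_delta (N n : ℕ+) : tailSum (delta N) n = if n < N then 1 else 0 := by
  rw [tailSum]
  have h : ∀ m : ℕ+, (if n < m then delta N m else 0)
      = if m = N then (if n < N then (1:ℂ) else 0) else 0 := by
    intro m; by_cases h : m = N
    · subst h; by_cases h2 : n < m <;> simp [delta, h2]
    · by_cases h2 : n < m <;> simp [delta, h, h2]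
  rw [tsum_congr h]; exact tsum_ite_eq N _

lemma sub_kmul_delta (a : ℕ+ → ℂ) (N n : ℕ+) :
    (a - kmul a (delta N)) n =
      if n < N then 0 else if n = N then -(tailSum a N) else a n := by
  have h : kmul a (delta N) n
      = a n * delta N n + a n * (if n < N then 1 else 0) + delta N n * tailSum a n := by
    rw [kmul, tailSum_delta]
  rcases lt_trichotomy n N with h2 | h2 | h2
  · simp [Pi.sub_apply, h, delta, h2, h2.ne]
  · subst h2; simp [Pi.sub_apply, h, delta, lt_irrefl]
  · simp [Pi.sub_apply, h, delta, h2.ne', not_lt.2 h2.le, asymm h2]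

lemma norm_sub_kmul_delta (φ : ℕ+ × ℕ+ ≃ ℕ+) (k : ℕ+) {a : ℕ+ → ℂ}
    (ha : Summable fun n => ‖a n‖ * kgWeight φ k n) (N : ℕ+) :
    kgNorm φ k (a - kmul a (delta N)) ≤
      (kgWeight φ k N + 1) * ∑' n, (if N < n then ‖a n‖ * kgWeight φ k n else 0) := by
  have hA0 : ∀ n, 0 ≤ ‖a n‖ * kgWeight φ k n :=
    fun n => mul_nonneg (norm_nonneg _) (weight_nonneg φ k n)
  have hfe : (fun n => ‖(a - kmul a (delta N)) n‖ * kgWeight φ k n)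
      = fun n => (if n = N then ‖tailSum a N‖ * kgWeight φ k N else 0)
          + (if N < n then ‖a n‖ * kgWeight φ k n else 0) := by
    funext n
    rw [sub_kmul_delta]
    rcases lt_trichotomy n N with h | h | h
    · simp [h, h.ne, asymm h]
    · subst h; simp [lt_irrefl]
    · simp [h, h.ne', not_lt.2 h.le]
  have h1 : Summable fun n => if n = N then ‖tailSum a N‖ * kgWeight φ k N else 0 :=
    summable_of_ne_finset_zero (s := {N}) (fun m hm => by simp at hm; simp [hm])
  have h2 : Summable fun n => if N < n then ‖a n‖ * kgWeight φ k n else 0 := summable_ite hA0 ha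
  rw [kgNorm, hfe, Summable.tsum_add h1 h2, tsum_ite_eq N _]
  have ht := norm_tailSum_le φ k ha N
  have hT0 : 0 ≤ ∑' n, (if N < n then ‖a n‖ * kgWeight φ k n else 0) := tsum_ite_nonneg hA0
  nlinarith [weight_nonneg φ k N, norm_nonneg (tailSum a N),
    mul_le_mul_of_nonneg_right ht (weight_nonneg φ k N)]

/-! ### tails of summable series are small -/

lemma tail_small {A : ℕ+ → ℝ} (hA : Summable A) (h0 : ∀ n, 0 ≤ A n) {δ : ℝ} (hδ : 0 < δ) :
    ∃ N₀ : ℕ+, ∀ N, N₀ ≤ N → (∑' n, if N < n then A n else 0) < δ := by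
  have hev : ∀ᶠ s : Finset ℕ+ in atTop, (∑' n, A n) - δ < ∑ n ∈ s, A n :=
    hA.hasSum.eventually (eventually_gt_nhds (by linarith))
  obtain ⟨s₀, hs₀⟩ := Filter.eventually_atTop.1 hev
  refine ⟨s₀.sup id, fun N hN => ?_⟩
  have hsub : s₀ ⊆ Finset.Iic N := fun x hx =>
    Finset.mem_Iic.2 ((Finset.le_sup (f := id) hx).trans hN)
  have hlow : (∑' n, A n) - δ < ∑ n ∈ Finset.Iic N, A n := hs₀ _ (Finset.le_iff_subset.2 hsub)
  have hsplitfun : ∀ n, A n = (if n ≤ N then A n else 0) + (if N < n then A n else 0) := by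
    intro n; by_cases h : n ≤ N
    · rw [if_pos h, if_neg (not_lt.2 h), add_zero]
    · rw [if_neg h, if_pos (not_le.1 h), zero_add]
  have s1 : Summable fun n => if n ≤ N then A n else 0 := summable_ite h0 hA
  have s2 : Summable fun n => if N < n then A n else 0 := summable_ite h0 hA
  have hsplit : ∑' n, A n
      = (∑' n, if n ≤ N then A n else 0) + ∑' n, (if N < n then A n else 0) := by
    rw [← Summable.tsum_add s1 s2]; exact tsum_congr hsplitfun
  have hfin : (∑' n, if n ≤ N then A n else 0) = ∑ n ∈ Finset.Iic N, A n := by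
    rw [tsum_eq_sum (s := Finset.Iic N) (fun b hb => if_neg (fun h => hb (Finset.mem_Iic.2 h)))]
    exact Finset.sum_congr rfl fun x hx => if_pos (Finset.mem_Iic.1 hx)
  rw [hfin] at hsplit
  linarith

/-! ### rows of φ are strictly monotone -/

lemma phi_row_strictMono (φ : ℕ+ × ℕ+ ≃ ℕ+) (hφ : ∀ i j : ℕ+, φ (i, j) < φ (i, j + 1))
    (i : ℕ+) : StrictMono fun j => φ (i, j) := by
  intro j j' h
  induction j' using PNat.recOn with
  | one => exact absurd h (PNat.not_lt_one j)
  | succ n ih =>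
    rcases (PNat.lt_add_one_iff.1 h).lt_or_eq with h2 | h2
    · exact (ih h2).trans (hφ i n)
    · subst h2; exact hφ i j

lemma strictMono_le_apply {f : ℕ+ → ℕ+} (hf : StrictMono f) (n : ℕ+) : n ≤ f n := by
  induction n using PNat.recOn with
  | one => exact PNat.one_le _
  | succ n ih => exact PNat.add_one_le_iff.2 (ih.trans_lt (hf (PNat.lt_add_one_iff.2 le_rfl)))

/-! ### misc -/

lemma memKG_sub (φ : ℕ+ × ℕ+ ≃ ℕ+) {a b : ℕ+ → ℂ} (ha : memKG φ a) (hb : memKG φ b) :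
    memKG φ (a - b) := by
  intro k
  refine Summable.of_nonneg_of_le (fun n => mul_nonneg (norm_nonneg _) (weight_nonneg φ k n))
    (fun n => ?_) ((ha k).add (hb k))
  calc ‖(a - b) n‖ * kgWeight φ k n ≤ (‖a n‖ + ‖b n‖) * kgWeight φ k n :=
        mul_le_mul_of_nonneg_right (norm_sub_le _ _) (weight_nonneg φ k n)
    _ = ‖a n‖ * kgWeight φ k n + ‖b n‖ * kgWeight φ k n := by ring

lemma coord_le_kgNorm (φ : ℕ+ × ℕ+ ≃ ℕ+) (k : ℕ+) {a : ℕ+ → ℂ} (ha : memKG φ a) (n : ℕ+) :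
    ‖a n‖ ≤ kgNorm φ k a := by
  have h := Summable.le_tsum (ha k) n (fun m _ => mul_nonneg (norm_nonneg _) (weight_nonneg φ k m))
  exact (le_mul_of_one_le_right (norm_nonneg _) (one_le_weight φ k n)).trans h

lemma norm_tailSum_le' {a : ℕ+ → ℂ} (ha : Summable fun n => ‖a n‖) (N : ℕ+) :
    ‖tailSum a N‖ ≤ ∑' m, (if N < m then ‖a m‖ else 0) := by
  have hnite : Summable fun m => ‖if N < m then a m else 0‖ := by
    refine (summable_ite (P := fun m => N < m) (fun n => norm_nonneg (a n)) ha).congr fun m => ?_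
    by_cases h : N < m <;> simp [h]
  have h1 : ‖tailSum a N‖ ≤ ∑' m, ‖if N < m then a m else 0‖ := norm_tsum_le_tsum_norm hnite
  refine h1.trans (le_of_eq (tsum_congr fun m => ?_))
  by_cases h : N < m <;> simp [h]

lemma kgNorm_nonneg (φ : ℕ+ × ℕ+ ≃ ℕ+) (k : ℕ+) (a : ℕ+ → ℂ) : 0 ≤ kgNorm φ k a :=
  tsum_nonneg fun n => mul_nonneg (norm_nonneg _) (weight_nonneg φ k n)

end KGaux

/-- The Köthe–Grothendieck algebra `A(P)` is a commutative topological
algebra (each norm `‖·‖_k` is submultiplicative, so convergence and boundedness in its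
topology mean convergence and boundedness with respect to every `‖·‖_k`) which has a
(two-sided) locally bounded approximate identity but no (two-sided) bounded approximate
identity. -/
theorem stmt_16 (φ : ℕ+ × ℕ+ ≃ ℕ+) (hφ : ∀ i j : ℕ+, φ (i, j) < φ (i, j + 1)) :
    -- `A(P)` is a commutative algebra, with each norm submultiplicative
    (∀ a b : ℕ+ → ℂ, kmul a b = kmul b a) ∧
    (∀ a b : ℕ+ → ℂ, memKG φ a → memKG φ b → memKG φ (kmul a b)) ∧
    (∀ (k : ℕ+) (a b : ℕ+ → ℂ), memKG φ a → memKG φ b →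
      kgNorm φ k (kmul a b) ≤ kgNorm φ k a * kgNorm φ k b) ∧
    -- `A(P)` has a (two-sided) locally bounded approximate identity
    (∀ (k : ℕ+) (ε : ℝ), 0 < ε → ∃ C : ℝ, 0 < C ∧
      ∀ F : Finset (ℕ+ → ℂ), (∀ a ∈ F, memKG φ a) →
        ∃ b : ℕ+ → ℂ, memKG φ b ∧ kgNorm φ k b < C * ε ∧
          ∀ a ∈ F, kgNorm φ k (a - kmul a b) < ε ∧ kgNorm φ k (a - kmul b a) < ε) ∧
    -- `A(P)` has no (two-sided) bounded approximate identity
    ¬ ∃ (ι : Type) (_ : Preorder ι) (_ : IsDirected ι (· ≤ ·)) (_ : Nonempty ι)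
        (e : ι → ℕ+ → ℂ), (∀ i, memKG φ (e i)) ∧
        (∀ k : ℕ+, ∃ M : ℝ, ∀ i, kgNorm φ k (e i) ≤ M) ∧
        (∀ a : ℕ+ → ℂ, memKG φ a → ∀ k : ℕ+,
          Tendsto (fun i => kgNorm φ k (kmul a (e i) - a)) atTop (𝓝 (0 : ℝ))) ∧
        (∀ a : ℕ+ → ℂ, memKG φ a → ∀ k : ℕ+,
          Tendsto (fun i => kgNorm φ k (kmul (e i) a - a)) atTop (𝓝 (0 : ℝ))) := by
  open KGaux in
  have hcomm : ∀ a b : ℕ+ → ℂ, kmul a b = kmul b a := by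
    intro a b; funext n; simp only [kmul]; ring
  refine ⟨hcomm, fun a b ha hb k => (KGaux.kmul_key φ k (ha k) (hb k)).1,
    fun k a b ha hb => (KGaux.kmul_key φ k (ha k) (hb k)).2, ?_, ?_⟩
  · -- locally bounded approximate identity
    intro k ε hε
    set K : ℝ := ((k : ℕ) : ℝ) ^ (k : ℕ) with hK
    have hK0 : 0 ≤ K := by positivity
    refine ⟨(K + 1) / ε, by positivity, ?_⟩
    intro F hF
    set δ : ℝ := ε / (K + 1) with hδdef
    have hδ : 0 < δ := by positivity
    have hch : ∀ a : ℕ+ → ℂ, ∃ N₀ : ℕ+, a ∈ F →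
        ∀ N, N₀ ≤ N → (∑' n, if N < n then ‖a n‖ * kgWeight φ k n else 0) < δ := by
      intro a
      by_cases h : a ∈ F
      · obtain ⟨N₀, hN₀⟩ := KGaux.tail_small (hF a h k)
          (fun n => mul_nonneg (norm_nonneg _) (KGaux.weight_nonneg φ k n)) hδ
        exact ⟨N₀, fun _ => hN₀⟩
      · exact ⟨1, fun h' => absurd h' h⟩
    choose g hg using hch
    set N₀ : ℕ+ := F.sup g with hN₀def
    set N : ℕ+ := φ (k, N₀) with hNdef
    have hNge : N₀ ≤ N :=
      KGaux.strictMono_le_apply (KGaux.phi_row_strictMono φ hφ k) N₀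
    have hwN : kgWeight φ k N = K := by
      rw [kgWeight, hNdef, Equiv.symm_apply_apply, kgMatrix, if_neg (lt_irrefl k)]
    refine ⟨KGaux.delta N, KGaux.memKG_delta φ N, ?_, ?_⟩
    · rw [KGaux.kgNorm_delta, hwN, div_mul_cancel₀ _ hε.ne']
      exact lt_add_one K
    · intro a haF
      have htail : (∑' n, if N < n then ‖a n‖ * kgWeight φ k n else 0) < δ :=
        hg a haF N ((Finset.le_sup haF).trans hNge)
      have hbound := KGaux.norm_sub_kmul_delta φ k (hF a haF k) N
      rw [hwN] at hbound
      have hlt : kgNorm φ k (a - kmul a (KGaux.delta N)) < ε := by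
        have h2 : (K + 1) * (∑' n, if N < n then ‖a n‖ * kgWeight φ k n else 0)
            < (K + 1) * δ := by
          exact mul_lt_mul_of_pos_left htail (by positivity)
        have h3 : (K + 1) * δ = ε := by
          rw [hδdef]; field_simp
        linarith
      exact ⟨hlt, by rwa [hcomm (KGaux.delta N) a]⟩
  · -- no bounded approximate identity
    rintro ⟨ι, ipre, idir, inon, e, hmem, hbdd, hR, -⟩
    letI := ipre
    haveI := idir; haveI := inon
    haveI : (atTop : Filter ι).NeBot := atTop_neBot_iff.2 ⟨inon, idir⟩
    choose M hM using hbdd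
    have hM0 : ∀ k, 0 ≤ M k :=
      fun k => (KGaux.kgNorm_nonneg φ k (e (Classical.arbitrary ι))).trans (hM k _)
    -- Step A : partial "tail sums from N" of the net tend to 1
    have stepA : ∀ N : ℕ+,
        Tendsto (fun α => e α N + tailSum (e α) N) atTop (𝓝 (1 : ℂ)) := by
      intro N
      have hconv := hR (KGaux.delta N) (KGaux.memKG_delta φ N) 1
      have hcoord : ∀ α, ‖(e α N + tailSum (e α) N) - 1‖
          ≤ kgNorm φ 1 (kmul (KGaux.delta N) (e α) - KGaux.delta N) := by
        intro α
        have hd : memKG φ (kmul (KGaux.delta N) (e α) - KGaux.delta N) :=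
          KGaux.memKG_sub φ
            (fun k => (KGaux.kmul_key φ k (KGaux.memKG_delta φ N k) (hmem α k)).1)
            (KGaux.memKG_delta φ N)
        have h := KGaux.coord_le_kgNorm φ 1 hd N
        have hco : (kmul (KGaux.delta N) (e α) - KGaux.delta N) N
            = (e α N + tailSum (e α) N) - 1 := by
          simp [kmul, KGaux.delta, KGaux.tailSum_delta, Pi.sub_apply]
        rwa [hco] at h
      have h0 : Tendsto (fun α => (e α N + tailSum (e α) N) - 1) atTop (𝓝 0) :=
        squeeze_zero_norm hcoord hconv
      have h1 := h0.add_const 1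
      simpa using h1
    -- constants
    have hc0 : ∀ i : ℕ+, 0 ≤ M 2 / ((i:ℕ):ℝ)^2 :=
      fun i => div_nonneg (hM0 2) (by positivity)
    have hcs : Summable (fun i : ℕ+ => M 2 / ((i:ℕ):ℝ)^2) := by
      have h2 : Summable (fun n : ℕ => 1 / ((n:ℝ))^2) :=
        Real.summable_one_div_nat_pow.2 one_lt_two
      have h1 : Summable (fun n : ℕ => M 2 / ((n:ℝ))^2) := by
        simpa only [mul_one_div] using h2.mul_left (M 2)
      exact h1.comp_injective PNat.coe_injective
    obtain ⟨I₀, hI₀⟩ := KGaux.tail_small hcs hc0 (show (0:ℝ) < 1/4 by norm_num)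
    set I : ℕ+ := max I₀ 1 + 1 with hIdef
    have h2I : (2 : ℕ+) ≤ I := by have h := add_le_add (le_max_right I₀ 1) (le_refl (1:ℕ+)); exact h
    have htailI : (∑' i : ℕ+, if I ≤ i then M 2 / ((i:ℕ):ℝ)^2 else 0) < 1/4 := by
      have h := hI₀ (max I₀ 1) (le_max_left _ _)
      refine lt_of_le_of_lt (le_of_eq (tsum_congr fun i => ?_)) h
      by_cases hc : I ≤ i
      · rw [if_pos hc, if_pos (by rwa [← PNat.add_one_le_iff, ← hIdef])]
      · rw [if_neg hc, if_neg (fun hlt => hc (by rw [hIdef, PNat.add_one_le_iff]; exact hlt))]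
    set Mstar : ℝ := ∑ i ∈ Finset.Iio I, |M (i + 1)| with hMsdef
    have hMstar0 : 0 ≤ Mstar := Finset.sum_nonneg fun i _ => abs_nonneg _
    have hMstar : ∀ i : ℕ+, i < I → M (i + 1) ≤ Mstar := fun i hi =>
      (le_abs_self _).trans
        (Finset.single_le_sum (f := fun j : ℕ+ => |M (j + 1)|)
          (fun j _ => abs_nonneg _) (Finset.mem_Iio.2 hi))
    set cI : ℕ := (Finset.Iio I).card with hcIdef
    obtain ⟨nJ, hnJ⟩ := exists_nat_gt (4 * ((cI:ℝ) * Mstar))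
    set J : ℕ+ := ⟨nJ + 1, Nat.succ_pos _⟩ with hJdef
    have hJpos : (0:ℝ) < ((J:ℕ):ℝ) := by exact_mod_cast J.pos
    have hJcast : ((J:ℕ):ℝ) = (nJ:ℝ) + 1 := by simp [hJdef]
    have hJbound : (cI:ℝ) * Mstar / ((J:ℕ):ℝ) < 1/4 := by
      rw [div_lt_iff₀ hJpos, hJcast]
      linarith
    set N : ℕ+ := (Finset.Iio I).sup (fun i => φ (i, J)) + 1 with hNdef
    have hNrow : ∀ i : ℕ+, i < I → φ (i, J) < N := fun i hi =>
      PNat.lt_add_one_iff.2 (Finset.le_sup (f := fun i => φ (i, J)) (Finset.mem_Iio.2 hi))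
    -- the uniform upper bound
    have hub : ∀ α, ‖e α N + tailSum (e α) N‖ ≤ 1/2 := by
      intro α
      have hE : memKG φ (e α) := hmem α
      have hnEs : Summable fun n => ‖e α n‖ := KGaux.summable_norm_of φ 1 (hE 1)
      have h1 : ‖e α N + tailSum (e α) N‖ ≤ ∑' m, (if N ≤ m then ‖e α m‖ else 0) := by
        rw [KGaux.tsum_ite_ge_split_r _ hnEs (fun n => norm_nonneg _) N]
        exact (norm_add_le _ _).trans (add_le_add le_rfl (KGaux.norm_tailSum_le' hnEs N))
      have hgs' : Summable (fun p : ℕ+ × ℕ+ => ‖e α (φ p)‖) := hnEs.comp_injective φ.injective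
      have hgs : Summable (fun p : ℕ+ × ℕ+ => if N ≤ φ p then ‖e α (φ p)‖ else 0) :=
        KGaux.summable_ite (fun p => norm_nonneg _) hgs'
      have h2 : (∑' m, (if N ≤ m then ‖e α m‖ else 0))
          = ∑' p : ℕ+ × ℕ+, (if N ≤ φ p then ‖e α (φ p)‖ else 0) :=
        (φ.tsum_eq (fun m => if N ≤ m then ‖e α m‖ else 0)).symm
      have h3 : (∑' p : ℕ+ × ℕ+, (if N ≤ φ p then ‖e α (φ p)‖ else 0))
          = ∑' i : ℕ+, ∑' j : ℕ+, (if N ≤ φ (i, j) then ‖e α (φ (i, j))‖ else 0) :=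
        Summable.tsum_prod' hgs hgs.prod_factor
      have hrowinj : ∀ i : ℕ+, Function.Injective (fun j : ℕ+ => φ (i, j)) := fun i a b h =>
        (Prod.ext_iff.1 (φ.injective h)).2
      have hrow0 : ∀ i : ℕ+, 0 ≤ ∑' j : ℕ+, (if N ≤ φ (i, j) then ‖e α (φ (i, j))‖ else 0) :=
        fun i => tsum_nonneg (KGaux.ite_nonneg (fun j => norm_nonneg _))
      -- large rows
      have hrowbig : ∀ i : ℕ+, I ≤ i →
          (∑' j : ℕ+, (if N ≤ φ (i, j) then ‖e α (φ (i, j))‖ else 0))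
            ≤ M 2 / ((i:ℕ):ℝ)^2 := by
        intro i hi
        have h2i : (2:ℕ+) ≤ i := h2I.trans hi
        have hwt : ∀ j : ℕ+, kgWeight φ 2 (φ (i, j)) = ((i:ℕ):ℝ)^2 := fun j => by
          rw [kgWeight, Equiv.symm_apply_apply, kgMatrix, if_neg (not_lt.2 h2i)]
          norm_num
        have hcomp : Summable (fun j : ℕ+ => ‖e α (φ (i, j))‖ * kgWeight φ 2 (φ (i, j))) :=
          (hE 2).comp_injective (hrowinj i)
        have hle2 : (∑' j : ℕ+, ‖e α (φ (i, j))‖ * kgWeight φ 2 (φ (i, j))) ≤ M 2 :=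
          (Summable.tsum_le_tsum_of_inj (fun j => φ (i, j)) (hrowinj i)
            (fun x _ => mul_nonneg (norm_nonneg _) (KGaux.weight_nonneg φ 2 x))
            (fun j => le_rfl) hcomp (hE 2)).trans (hM 2 α)
        have heq : (∑' j : ℕ+, ‖e α (φ (i, j))‖ * kgWeight φ 2 (φ (i, j)))
            = (∑' j : ℕ+, ‖e α (φ (i, j))‖) * ((i:ℕ):ℝ)^2 := by
          rw [← tsum_mul_right]; exact tsum_congr fun j => by rw [hwt j]
        have hip : (0:ℝ) < ((i:ℕ):ℝ)^2 := by
          have h := i.pos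
          have : (0:ℝ) < ((i:ℕ):ℝ) := by exact_mod_cast h
          positivity
        have hfin : (∑' j : ℕ+, ‖e α (φ (i, j))‖) ≤ M 2 / ((i:ℕ):ℝ)^2 := by
          rw [le_div_iff₀ hip]; rw [heq] at hle2; exact hle2
        exact (KGaux.tsum_ite_le (fun j => norm_nonneg _)
          (hnEs.comp_injective (hrowinj i))).trans hfin
      -- small rows
      have hrowsmall : ∀ i : ℕ+, i < I →
          (∑' j : ℕ+, (if N ≤ φ (i, j) then ‖e α (φ (i, j))‖ else 0))
            ≤ Mstar / ((J:ℕ):ℝ) := by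
        intro i hi
        have hmono := KGaux.phi_row_strictMono φ hφ i
        have hstep : ∀ j : ℕ+, (if N ≤ φ (i, j) then ‖e α (φ (i, j))‖ else 0)
            ≤ (if J < j then ‖e α (φ (i, j))‖ else 0) := by
          intro j
          by_cases h : N ≤ φ (i, j)
          · have hJj : J < j := hmono.lt_iff_lt.1 ((hNrow i hi).trans_le h)
            rw [if_pos h, if_pos hJj]
          · rw [if_neg h]
            exact KGaux.ite_nonneg (fun j => norm_nonneg _) j
        have hwt : ∀ j : ℕ+, kgWeight φ (i + 1) (φ (i, j)) = ((j:ℕ):ℝ)^((i:ℕ)+1) := fun j => by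
          rw [kgWeight, Equiv.symm_apply_apply, kgMatrix, if_pos (PNat.lt_add_one_iff.2 le_rfl)]
          norm_num [PNat.add_coe, PNat.one_coe]
        have hstep2 : ∀ j : ℕ+, (if J < j then ‖e α (φ (i, j))‖ else 0)
            ≤ (1 / ((J:ℕ):ℝ)) * (‖e α (φ (i, j))‖ * kgWeight φ (i+1) (φ (i, j))) := by
          intro j
          by_cases h : J < j
          · rw [if_pos h, hwt j]
            have hj1 : (1:ℝ) ≤ ((j:ℕ):ℝ) := by exact_mod_cast j.one_le
            have hJj : ((J:ℕ):ℝ) ≤ ((j:ℕ):ℝ) := by exact_mod_cast h.le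
            have hpow : ((J:ℕ):ℝ) ≤ ((j:ℕ):ℝ)^((i:ℕ)+1) :=
              hJj.trans (le_self_pow₀ hj1 (Nat.succ_ne_zero _))
            calc ‖e α (φ (i, j))‖ = ‖e α (φ (i, j))‖ * 1 := (mul_one _).symm
              _ ≤ ‖e α (φ (i, j))‖ * ((1 / ((J:ℕ):ℝ)) * ((j:ℕ):ℝ)^((i:ℕ)+1)) := by
                  refine mul_le_mul_of_nonneg_left ?_ (norm_nonneg _)
                  rw [one_div, ← div_eq_inv_mul, le_div_iff₀ hJpos]
                  simpa [one_mul] using hpow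
              _ = (1 / ((J:ℕ):ℝ)) * (‖e α (φ (i, j))‖ * ((j:ℕ):ℝ)^((i:ℕ)+1)) := by ring
          · rw [if_neg h]
            exact mul_nonneg (by positivity)
              (mul_nonneg (norm_nonneg _) (KGaux.weight_nonneg φ (i+1) _))
        have hsumL : Summable (fun j : ℕ+ => if J < j then ‖e α (φ (i, j))‖ else 0) :=
          KGaux.summable_ite (fun j => norm_nonneg _) (hnEs.comp_injective (hrowinj i))
        have hsumR : Summable (fun j : ℕ+ =>
            (1 / ((J:ℕ):ℝ)) * (‖e α (φ (i, j))‖ * kgWeight φ (i+1) (φ (i, j)))) :=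
          ((hE (i+1)).comp_injective (hrowinj i)).mul_left _
        have hsumN : Summable (fun j : ℕ+ => if N ≤ φ (i, j) then ‖e α (φ (i, j))‖ else 0) :=
          KGaux.summable_ite (fun j => norm_nonneg _) (hnEs.comp_injective (hrowinj i))
        have hchain : (∑' j : ℕ+, (if N ≤ φ (i, j) then ‖e α (φ (i, j))‖ else 0))
            ≤ ∑' j : ℕ+, (1 / ((J:ℕ):ℝ)) * (‖e α (φ (i, j))‖ * kgWeight φ (i+1) (φ (i, j))) :=
          Summable.tsum_le_tsum (fun j => (hstep j).trans (hstep2 j)) hsumN hsumR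
        have hle3 : (∑' j : ℕ+, ‖e α (φ (i, j))‖ * kgWeight φ (i+1) (φ (i, j))) ≤ M (i+1) :=
          (Summable.tsum_le_tsum_of_inj (fun j => φ (i, j)) (hrowinj i)
            (fun x _ => mul_nonneg (norm_nonneg _) (KGaux.weight_nonneg φ (i+1) x))
            (fun j => le_rfl) ((hE (i+1)).comp_injective (hrowinj i)) (hE (i+1))).trans
            (hM (i+1) α)
        have hJinv : (0:ℝ) ≤ 1 / ((J:ℕ):ℝ) := by positivity
        calc (∑' j : ℕ+, (if N ≤ φ (i, j) then ‖e α (φ (i, j))‖ else 0))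
            ≤ ∑' j : ℕ+, (1 / ((J:ℕ):ℝ)) * (‖e α (φ (i, j))‖ * kgWeight φ (i+1) (φ (i, j))) :=
              hchain
          _ = (1 / ((J:ℕ):ℝ)) * ∑' j : ℕ+, ‖e α (φ (i, j))‖ * kgWeight φ (i+1) (φ (i, j)) :=
              tsum_mul_left
          _ ≤ (1 / ((J:ℕ):ℝ)) * M (i+1) := mul_le_mul_of_nonneg_left hle3 hJinv
          _ ≤ (1 / ((J:ℕ):ℝ)) * Mstar := mul_le_mul_of_nonneg_left (hMstar i hi) hJinv
          _ = Mstar / ((J:ℕ):ℝ) := by ring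
      -- combine rows
      have hsplitrow : ∀ i : ℕ+,
          (∑' j : ℕ+, (if N ≤ φ (i, j) then ‖e α (φ (i, j))‖ else 0))
            ≤ (if i < I then Mstar / ((J:ℕ):ℝ) else 0)
              + (if I ≤ i then M 2 / ((i:ℕ):ℝ)^2 else 0) := by
        intro i
        by_cases h : i < I
        · rw [if_pos h, if_neg (not_le.2 h), add_zero]; exact hrowsmall i h
        · rw [if_neg h, if_pos (not_lt.1 h), zero_add]; exact hrowbig i (not_lt.1 h)
      have hS1 : Summable (fun i : ℕ+ => if i < I then Mstar / ((J:ℕ):ℝ) else 0) :=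
        summable_of_ne_finset_zero (s := Finset.Iio I)
          (fun i hi => if_neg (fun h => hi (Finset.mem_Iio.2 h)))
      have hS2 : Summable (fun i : ℕ+ => if I ≤ i then M 2 / ((i:ℕ):ℝ)^2 else 0) :=
        KGaux.summable_ite hc0 hcs
      have hRs : Summable (fun i : ℕ+ =>
          ∑' j : ℕ+, (if N ≤ φ (i, j) then ‖e α (φ (i, j))‖ else 0)) :=
        Summable.of_nonneg_of_le hrow0 hsplitrow (hS1.add hS2)
      have hfirst : (∑' i : ℕ+, if i < I then Mstar / ((J:ℕ):ℝ) else 0)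
          = (cI:ℝ) * (Mstar / ((J:ℕ):ℝ)) := by
        rw [tsum_eq_sum (s := Finset.Iio I)
          (fun i hi => if_neg (fun h => hi (Finset.mem_Iio.2 h)))]
        rw [Finset.sum_congr rfl (fun i hi => if_pos (Finset.mem_Iio.1 hi)),
          Finset.sum_const, nsmul_eq_mul, hcIdef]
      calc ‖e α N + tailSum (e α) N‖
          ≤ ∑' m, (if N ≤ m then ‖e α m‖ else 0) := h1
        _ = ∑' i : ℕ+, ∑' j : ℕ+, (if N ≤ φ (i, j) then ‖e α (φ (i, j))‖ else 0) := by
            rw [h2, h3]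
        _ ≤ ∑' i : ℕ+, ((if i < I then Mstar / ((J:ℕ):ℝ) else 0)
              + (if I ≤ i then M 2 / ((i:ℕ):ℝ)^2 else 0)) :=
            Summable.tsum_le_tsum hsplitrow hRs (hS1.add hS2)
        _ = (∑' i : ℕ+, if i < I then Mstar / ((J:ℕ):ℝ) else 0)
            + ∑' i : ℕ+, (if I ≤ i then M 2 / ((i:ℕ):ℝ)^2 else 0) := Summable.tsum_add hS1 hS2
        _ ≤ 1/2 := by
            rw [hfirst]
            have h4 : (cI:ℝ) * (Mstar / ((J:ℕ):ℝ)) = (cI:ℝ) * Mstar / ((J:ℕ):ℝ) := by ring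
            linarith [htailI, hJbound]
    -- conclude
    obtain ⟨α, hα⟩ := (Metric.tendsto_nhds.1 (stepA N) (1/2) (by norm_num)).exists
    rw [Complex.dist_eq] at hα
    have h1 : ‖e α N + tailSum (e α) N‖ ≥ ‖(1:ℂ)‖ - ‖e α N + tailSum (e α) N - 1‖ := by
      have := norm_sub_norm_le (e α N + tailSum (e α) N) 1
      have habs := abs_le.1 (abs_norm_sub_norm_le (e α N + tailSum (e α) N) 1)
      linarith [habs.2]
    rw [norm_one] at h1
    have := hub α
    linarith
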